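/- For every real β with 0 < β < 1 there is a constant c > 0 such that the following holds. Let α > 0 and let (S_k)_{k≥1} be a sequence of positive reals with S_1 ≥ 1 and S_{k+1} ≥ S_k + α·S_k^{β} for every k ≥ 1. Then for every k ≥ 1, S_{k+1} ≥ c·min(α, α^{1/(1−β)})·k^{1/(1−β)}. -/

import Mathlib

lemma key_rpow_ineq {p : ℝ} (hp0 : 0 < p) (hp1 : p < 1) {x : ℝ} (hx : 0 ≤ x) :
    1 + min ((2:ℝ)^p - 1) (1 - (2:ℝ)^(-p)) * min x (x ^ p) ≤ (1 + x) ^ p := by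
  have hxp0 : 0 ≤ x ^ p := Real.rpow_nonneg hx p
  rcases le_total x 1 with hx1 | hx1
  · -- small x : use concavity chord between 1 and 2
    have hmin : min x (x ^ p) = x := by
      rcases eq_or_lt_of_le hx with h | h
      · simp [← h, Real.zero_rpow hp0.ne']
      · exact min_eq_left (by
          calc x = x ^ (1:ℝ) := (Real.rpow_one x).symm
          _ ≤ x ^ p := Real.rpow_le_rpow_of_exponent_ge h hx1 hp1.le)
    rw [hmin]
    have hc := (Real.concaveOn_rpow hp0.le hp1.le).2 (by norm_num : (1:ℝ) ∈ Set.Ici (0:ℝ))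
      (by norm_num : (2:ℝ) ∈ Set.Ici (0:ℝ)) (by linarith : 0 ≤ 1 - x) hx (by ring)
    simp only [smul_eq_mul, Real.one_rpow] at hc
    have he : (1 - x) * 1 + x * 2 = 1 + x := by ring
    rw [he] at hc
    have hmle : min ((2:ℝ)^p - 1) (1 - (2:ℝ)^(-p)) ≤ (2:ℝ)^p - 1 := min_le_left _ _
    nlinarith [hc]
  · -- large x
    have hmin : min x (x ^ p) = x ^ p := min_eq_right (by
      calc x ^ p ≤ x ^ (1:ℝ) := Real.rpow_le_rpow_of_exponent_le hx1 hp1.le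
      _ = x := Real.rpow_one x)
    rw [hmin]
    have hA : (2:ℝ)^p ≤ (1 + x) ^ p := Real.rpow_le_rpow (by norm_num) (by linarith) hp0.le
    have hxA : x ^ p ≤ (1 + x) ^ p := Real.rpow_le_rpow hx (by linarith) hp0.le
    have hneg : (2:ℝ)^(-p) = ((2:ℝ)^p)⁻¹ := Real.rpow_neg (by norm_num) p
    have h2pos : (0:ℝ) < (2:ℝ)^p := Real.rpow_pos_of_pos (by norm_num) p
    have h1le : 1 ≤ (1 + x) ^ p * (2:ℝ)^(-p) := by
      rw [hneg, ← div_eq_mul_inv, le_div_iff₀ h2pos, one_mul]; exact hA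
    have hnple : (2:ℝ)^(-p) ≤ 1 :=
      Real.rpow_le_one_of_one_le_of_nonpos (by norm_num) (by linarith)
    have hmle : min ((2:ℝ)^p - 1) (1 - (2:ℝ)^(-p)) ≤ 1 - (2:ℝ)^(-p) := min_le_right _ _
    nlinarith [hxp0, hxA, h1le]

/-- **Discrete growth lemma.** For every real `β` with `0 < β < 1` there is a constant
`c > 0` such that: for every `α > 0` and every sequence `(S_k)_{k ≥ 1}` of positive reals
with `S_1 ≥ 1` and `S_{k+1} ≥ S_k + α · S_k^β` for all `k ≥ 1`, one has
`S_{k+1} ≥ c · min(α, α^(1/(1-β))) · k^(1/(1-β))` for every `k ≥ 1`. -/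
theorem discrete_growth_lemma (β : ℝ) (hβ0 : 0 < β) (hβ1 : β < 1) :
    ∃ c : ℝ, 0 < c ∧
      ∀ α : ℝ, 0 < α →
      ∀ S : ℕ → ℝ,
        (∀ k : ℕ, 1 ≤ k → 0 < S k) →
        1 ≤ S 1 →
        (∀ k : ℕ, 1 ≤ k → S k + α * S k ^ β ≤ S (k + 1)) →
        ∀ k : ℕ, 1 ≤ k →
          c * min α (α ^ (1 / (1 - β))) * (k : ℝ) ^ (1 / (1 - β)) ≤ S (k + 1) := by
  set p : ℝ := 1 - β with hpdef
  have hp0 : 0 < p := by simp only [hpdef]; linarith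
  have hp1 : p < 1 := by simp only [hpdef]; linarith
  set c₂ : ℝ := min ((2:ℝ)^p - 1) (1 - (2:ℝ)^(-p)) with hc2def
  have hc2pos : 0 < c₂ := by
    apply lt_min
    · have : (1:ℝ) < (2:ℝ)^p := Real.one_lt_rpow_iff_of_pos (by norm_num) |>.2 (Or.inl ⟨by norm_num, hp0⟩)
      linarith
    · have : (2:ℝ)^(-p) < 1 := Real.rpow_lt_one_of_one_lt_of_neg (by norm_num) (by linarith)
      linarith
  refine ⟨c₂ ^ (1/p), Real.rpow_pos_of_pos hc2pos _, ?_⟩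
  intro α hα S hSpos hS1 hstep
  set μ : ℝ := min α (α ^ p) with hμdef
  have hμpos : 0 < μ := lt_min hα (Real.rpow_pos_of_pos hα p)
  -- S k ≥ 1 for all k ≥ 1
  have hSone : ∀ k : ℕ, 1 ≤ k → 1 ≤ S k := by
    intro k hk
    induction k with
    | zero => omega
    | succ n ih =>
      rcases Nat.lt_or_ge n 1 with hn | hn
      · interval_cases n
        exact hS1
      · have h1 : 1 ≤ S n := ih hn
        have h2 := hstep n hn
        have h3 : 0 ≤ α * S n ^ β := by positivity
        linarith
  -- step inequality for T = S ^ p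
  have hstepT : ∀ k : ℕ, 1 ≤ k → S k ^ p + c₂ * μ ≤ S (k+1) ^ p := by
    intro k hk
    have ha1 : 1 ≤ S k := hSone k hk
    have ha0 : 0 < S k := by linarith
    set x : ℝ := α * S k ^ β / S k with hxdef
    have hx0 : 0 ≤ x := by positivity
    have hEq : S k * (1 + x) = S k + α * S k ^ β := by
      rw [hxdef, mul_add, mul_one, mul_div_assoc', mul_comm (S k) (α * S k ^ β), mul_div_assoc, div_self ha0.ne', mul_one]
    have hmono : (S k * (1 + x)) ^ p ≤ S (k+1) ^ p :=
      Real.rpow_le_rpow (mul_nonneg ha0.le (by linarith)) (by rw [hEq]; exact hstep k hk) hp0.le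
    have hmul : (S k * (1 + x)) ^ p = S k ^ p * (1 + x) ^ p :=
      Real.mul_rpow ha0.le (by linarith)
    have hkey := key_rpow_ineq hp0 hp1 hx0
    -- S k ^ p * x = α
    have hβp : S k ^ p * S k ^ β = S k := by
      rw [← Real.rpow_add ha0]
      have hpb : p + β = 1 := by rw [hpdef]; ring
      rw [hpb, Real.rpow_one]
    have hxval : S k ^ p * x = α := by
      rw [hxdef, mul_div_assoc',
        show S k ^ p * (α * S k ^ β) = α * (S k ^ p * S k ^ β) by ring, hβp,
        mul_div_assoc, div_self ha0.ne', mul_one]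
    -- S k ^ p * x ^ p ≥ α ^ p
    have hSple : S k ^ p ≤ S k := by
      calc S k ^ p ≤ S k ^ (1:ℝ) := Real.rpow_le_rpow_of_exponent_le ha1 hp1.le
      _ = S k := Real.rpow_one _
    have hxpval : α ^ p ≤ S k ^ p * x ^ p := by
      rw [← Real.mul_rpow ha0.le hx0]
      apply Real.rpow_le_rpow hα.le _ hp0.le
      rw [← hxval]
      exact mul_le_mul_of_nonneg_right hSple hx0
    have hμle : μ ≤ S k ^ p * min x (x ^ p) := by
      rcases le_total x (x ^ p) with h | h
      · rw [min_eq_left h, hxval]; exact min_le_left _ _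
      · rw [min_eq_right h]
        exact le_trans (min_le_right _ _) hxpval
    have hSp0 : (0:ℝ) ≤ S k ^ p := Real.rpow_nonneg ha0.le p
    calc S k ^ p + c₂ * μ ≤ S k ^ p + c₂ * (S k ^ p * min x (x ^ p)) := by nlinarith
    _ = S k ^ p * (1 + c₂ * min x (x ^ p)) := by ring
    _ ≤ S k ^ p * (1 + x) ^ p := by
        apply mul_le_mul_of_nonneg_left _ hSp0
        calc 1 + c₂ * min x (x ^ p)
            = 1 + min ((2:ℝ)^p - 1) (1 - (2:ℝ)^(-p)) * min x (x ^ p) := by rw [hc2def]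
        _ ≤ (1 + x) ^ p := hkey
    _ = (S k * (1 + x)) ^ p := hmul.symm
    _ ≤ S (k+1) ^ p := hmono
  -- main induction
  have hmain : ∀ k : ℕ, 1 ≤ k → c₂ * μ * k ≤ S (k+1) ^ p := by
    intro k hk
    induction k with
    | zero => omega
    | succ n ih =>
      rcases Nat.lt_or_ge n 1 with hn | hn
      · interval_cases n
        have h1 : 1 ≤ S 1 ^ p := Real.one_le_rpow hS1 hp0.le
        have h2 := hstepT 1 (le_refl 1)
        push_cast
        nlinarith
      · have h1 := ih hn
        have h2 := hstepT (n+1) (by omega)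
        push_cast
        push_cast at h1
        nlinarith
  intro k hk
  have hk0 : (0:ℝ) < (k:ℝ) := by exact_mod_cast hk
  have h := hmain k hk
  have hSpos' : 0 < S (k+1) := hSpos (k+1) (by omega)
  have hfinal : (c₂ * μ * k) ^ (1/p) ≤ S (k+1) := by
    have h2 : (c₂ * μ * k) ^ (1/p) ≤ (S (k+1) ^ p) ^ (1/p) :=
      Real.rpow_le_rpow (by positivity) h (by positivity)
    have heq : (S (k+1) ^ p) ^ (1/p) = S (k+1) := by
      rw [← Real.rpow_mul hSpos'.le, mul_one_div, div_self hp0.ne', Real.rpow_one]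
    rwa [heq] at h2
  have hsplit : (c₂ * μ * k) ^ (1/p) = c₂ ^ (1/p) * μ ^ (1/p) * (k:ℝ) ^ (1/p) := by
    rw [Real.mul_rpow (by positivity) hk0.le, Real.mul_rpow hc2pos.le hμpos.le]
  have hμr : μ ^ (1/p) = min α (α ^ (1/p)) := by
    have hαp : (α ^ p) ^ (1/p) = α := by
      rw [← Real.rpow_mul hα.le, mul_one_div, div_self hp0.ne', Real.rpow_one]
    rcases le_total α (α ^ p) with h' | h'
    · rw [hμdef, min_eq_left h']
      have : α ^ (1/p) ≤ α := by
        calc α ^ (1/p) ≤ (α ^ p) ^ (1/p) := Real.rpow_le_rpow hα.le h' (by positivity)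
        _ = α := hαp
      rw [min_eq_right this]
    · rw [hμdef, min_eq_right h']
      have : α ≤ α ^ (1/p) := by
        calc α = (α ^ p) ^ (1/p) := hαp.symm
        _ ≤ α ^ (1/p) := Real.rpow_le_rpow (by positivity) h' (by positivity)
      rw [min_eq_left this, hαp]
  calc c₂ ^ (1/p) * min α (α ^ (1/p)) * (k:ℝ) ^ (1/p)
      = (c₂ * μ * k) ^ (1/p) := by rw [hsplit, hμr]
  _ ≤ S (k+1) := hfinal
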